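/- Let E be a finite set of vectors in ℝ^d with the partial orthogonality independence model. If M is a Markov boundary of v ∈ E and v lies in the span of E \ {v}, then the orthogonal projection of v onto span(M) equals v itself, i.e., v ∈ span(M). -/

import Mathlib

noncomputable def resid {E : Type*} [NormedAddCommGroup E] [InnerProductSpace ℝ E]
    [FiniteDimensional ℝ E] (C : Set E) (v : E) : E :=
  v - (Submodule.orthogonalProjectionOnto (Submodule.span ℝ C) v : E)

/-- `M` is a Markov blanket of `v` in `E` under partial orthogonality:
`M ⊆ E \ {v}` and the residuals of `v` and of every `u ∈ E \ ({v} ∪ M)`, after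
orthogonal projection onto the span of `M`, are orthogonal. -/
def MarkovBlanket {d : ℕ} [DecidableEq (EuclideanSpace ℝ (Fin d))]
    (E : Finset (EuclideanSpace ℝ (Fin d))) (v : EuclideanSpace ℝ (Fin d))
    (M : Finset (EuclideanSpace ℝ (Fin d))) : Prop :=
  M ⊆ E.erase v ∧ ∀ u ∈ E \ insert v M,
    inner ℝ (resid (M : Set (EuclideanSpace ℝ (Fin d))) v)
      (resid (M : Set (EuclideanSpace ℝ (Fin d))) u) = (0 : ℝ)

/-- A Markov boundary is a minimal Markov blanket. -/
def MarkovBoundary {d : ℕ} [DecidableEq (EuclideanSpace ℝ (Fin d))]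
    (E : Finset (EuclideanSpace ℝ (Fin d))) (v : EuclideanSpace ℝ (Fin d))
    (M : Finset (EuclideanSpace ℝ (Fin d))) : Prop :=
  MarkovBlanket E v M ∧ ∀ M' : Finset (EuclideanSpace ℝ (Fin d)),
    MarkovBlanket E v M' → ¬ M' ⊂ M

/-- If  lies in the span of the other embeddings, the projection of  onto the span
of any of its Markov boundaries equals  itself. -/
theorem markov_boundary_projection_eq_self {d : ℕ}
    [DecidableEq (EuclideanSpace ℝ (Fin d))]
    (E : Finset (EuclideanSpace ℝ (Fin d))) (v : EuclideanSpace ℝ (Fin d)) (hv : v ∈ E)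
    (M : Finset (EuclideanSpace ℝ (Fin d))) (hM : MarkovBoundary E v M)
    (hspan : v ∈ Submodule.span ℝ ((E.erase v : Finset (EuclideanSpace ℝ (Fin d))) :
      Set (EuclideanSpace ℝ (Fin d)))) :
    (Submodule.orthogonalProjectionOnto (Submodule.span ℝ (M : Set (EuclideanSpace ℝ (Fin d)))) v
      : EuclideanSpace ℝ (Fin d)) = v
    ∧ v ∈ Submodule.span ℝ (M : Set (EuclideanSpace ℝ (Fin d))) := by
  classical
  set K := Submodule.span ℝ (M : Set (EuclideanSpace ℝ (Fin d))) with hK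
  set r := resid (M : Set (EuclideanSpace ℝ (Fin d))) v with hr
  have hrK : r ∈ Kᗮ := Submodule.sub_starProjection_mem_orthogonal (K := K) v
  obtain ⟨⟨hMsub, hblanket⟩, _⟩ := hM
  -- r is orthogonal to every element of E.erase v
  have horth : ∀ u ∈ E.erase v, inner ℝ r u = (0 : ℝ) := by
    intro u hu
    by_cases hum : u ∈ M
    · rw [real_inner_comm]; exact hrK u (Submodule.subset_span hum)
    · have hu' : u ∈ E \ insert v M := by
        simp only [Finset.mem_sdiff, Finset.mem_insert]
        refine ⟨Finset.mem_of_mem_erase hu, ?_⟩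
        rintro (h | h)
        · exact (Finset.ne_of_mem_erase hu) h
        · exact hum h
      have h1 := hblanket u hu'
      have h2 : inner ℝ r ((Submodule.orthogonalProjectionOnto K u : EuclideanSpace ℝ (Fin d))) = (0 : ℝ) := by
        rw [real_inner_comm]; exact hrK _ (Submodule.orthogonalProjectionOnto K u).2
      have : (inner ℝ r u : ℝ) = (inner ℝ r (resid (M : Set (EuclideanSpace ℝ (Fin d))) u) : ℝ)
          + (inner ℝ r ((Submodule.orthogonalProjectionOnto K u : EuclideanSpace ℝ (Fin d))) : ℝ) := by
        rw [← inner_add_right]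
        congr 1
        simp [resid, hK]
      rw [this, h1, h2, add_zero]
  -- hence r ⟂ span(E.erase v), so ⟨r, v⟩ = 0
  have hrv : inner ℝ r v = (0 : ℝ) := by
    have hgen : ∀ x ∈ Submodule.span ℝ ((E.erase v : Finset _) :
        Set (EuclideanSpace ℝ (Fin d))), inner ℝ r x = (0 : ℝ) := by
      intro x hx
      induction hx using Submodule.span_induction with
      | mem x hx => exact horth x (by simpa [Finset.mem_erase, and_comm] using hx)
      | zero => simp
      | add x y _ _ hx hy => rw [inner_add_right, hx, hy, add_zero]
      | smul a x _ hx => rw [inner_smul_right, hx, mul_zero]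
    exact hgen v hspan
  have hrr : inner ℝ r r = (0 : ℝ) := by
    have h2 : inner ℝ r ((Submodule.orthogonalProjectionOnto K v : EuclideanSpace ℝ (Fin d))) = (0 : ℝ) := by
      rw [real_inner_comm]; exact hrK _ (Submodule.orthogonalProjectionOnto K v).2
    have : (inner ℝ r r : ℝ) = (inner ℝ r v : ℝ)
        - (inner ℝ r ((Submodule.orthogonalProjectionOnto K v : EuclideanSpace ℝ (Fin d))) : ℝ) := by
      rw [← inner_sub_right]; rfl
    rw [this, hrv, h2, sub_zero]
  have hr0 : r = 0 := inner_self_eq_zero.mp hrr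
  have heq : (Submodule.orthogonalProjectionOnto K v : EuclideanSpace ℝ (Fin d)) = v := by
    have := sub_eq_zero.mp hr0
    exact this.symm
  exact ⟨heq, heq ▸ (Submodule.orthogonalProjectionOnto K v).2⟩
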